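/- On $\SU(2)$ (structure constants $[X_1,X_2]=-\tfrac{1}{\sqrt2}X_3$, $[X_1,X_3]=\tfrac{1}{\sqrt2}X_2$, $[X_2,X_3]=-\tfrac{1}{\sqrt2}X_1$), the diagonal metrics $g_{1,b,1-b}$ for $0<b<1$ all have the same Ricci tensor $\mathrm{diag}(1,0,0)$, computed via the formula $\ricci(g_{a,b,d}) = \mathrm{diag}\big(\tfrac{a^2-(d-b)^2}{4bd},\tfrac{b^2-(a-d)^2}{4ad},\tfrac{d^2-(a-b)^2}{4ab}\big)$; hence the map $g\mapsto\ricci(g)$ is not injective up to scaling on diagonal left-invariant metrics on $\SU(2)$. -/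

import Mathlib

/-
STATEMENT 12: on `SU(2)` the diagonal metrics `g_{1,b,1-b}`, `0 < b < 1`, all have
Ricci tensor `diag(1,0,0)`; hence `ricci` is not injective up to scaling on diagonal
left-invariant metrics on `SU(2)`.
-/

noncomputable section

/-- The Ricci tensor of the diagonal left-invariant metric `g_{a,b,d} = diag(a,b,d)` on
`SU(2)` (structure constants `[X₁,X₂] = -X₃/√2`, `[X₁,X₃] = X₂/√2`, `[X₂,X₃] = -X₁/√2`,
i.e. `ε = -1`). -/
def ricSU2 (a b d : ℝ) : Matrix (Fin 3) (Fin 3) ℝ :=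
  Matrix.diagonal
    ![(a^2 - (d - b)^2)/(4*b*d), (b^2 - (a - d)^2)/(4*a*d), (d^2 - (a - b)^2)/(4*a*b)]

theorem statement12 :
    (∀ b : ℝ, 0 < b → b < 1 → ricSU2 1 b (1 - b) = Matrix.diagonal ![1, 0, 0]) ∧
    (∃ b₁ b₂ : ℝ, 0 < b₁ ∧ b₁ < 1 ∧ 0 < b₂ ∧ b₂ < 1 ∧
      ricSU2 1 b₁ (1 - b₁) = ricSU2 1 b₂ (1 - b₂) ∧
      ∀ c : ℝ, (Matrix.diagonal ![1, b₁, 1 - b₁] : Matrix (Fin 3) (Fin 3) ℝ) ≠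
        c • Matrix.diagonal ![1, b₂, 1 - b₂]) := by
  have key : ∀ b : ℝ, 0 < b → b < 1 →
      ricSU2 1 b (1 - b) = Matrix.diagonal ![1, 0, 0] := by
    intro b hb hb1
    have h1 : (1 : ℝ) - b ≠ 0 := by linarith
    have h2 : b ≠ 0 := ne_of_gt hb
    have e0 : ((1:ℝ)^2 - ((1 - b) - b)^2)/(4*b*(1-b)) = 1 := by
      field_simp; ring
    have e1 : (b^2 - ((1:ℝ) - (1 - b))^2)/(4*1*(1-b)) = 0 := by
      field_simp; ring
    have e2 : ((1-b)^2 - ((1:ℝ) - b)^2)/(4*1*b) = 0 := by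
      field_simp; ring
    unfold ricSU2
    rw [e0, e1, e2]
  refine ⟨key, 1/3, 1/2, by norm_num, by norm_num, by norm_num, by norm_num, ?_, ?_⟩
  · rw [key _ (by norm_num) (by norm_num), key _ (by norm_num) (by norm_num)]
  · intro c h
    have h0 := congrFun (congrFun h 0) 0
    have h1 := congrFun (congrFun h 1) 1
    simp [Matrix.diagonal] at h0 h1
    norm_num at h0 h1
    subst h0
    norm_num at h1
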